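/- Let $\alpha, y \in \mathbb{R}$ and $m \in \mathbb{N}$, and let $r \in \mathbb{R}$ satisfy $1 + r > 0$ and $y + \ln(1+r) > 0$. Then $\frac{d^m}{dr^m}\big[(y + \ln(1+r))^{\alpha}\big] = (1+r)^{-m} \sum_{u=0}^{m} S_1(m,u)\, (\alpha)_u\, (y + \ln(1+r))^{\alpha - u}$, where real powers $w^s$ (for $w > 0$, $s \in \mathbb{R}$) denote $e^{s \ln w}$. -/

import Mathlib

/-- The falling factorial `(α)_u = α (α-1) ⋯ (α-u+1)`. -/
noncomputable def fallingFactorial (a : ℝ) (m : ℕ) : ℝ :=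
  ∏ i ∈ Finset.range m, (a - i)

/-- The signed Stirling numbers of the first kind `S₁(n,m)`: the coefficient of `xᵐ`
in the falling factorial polynomial `x (x-1) ⋯ (x-n+1)`. -/
noncomputable def stirlingFirst (n m : ℕ) : ℝ :=
  (descPochhammer ℝ n).coeff m

lemma ff_succ (a : ℝ) (u : ℕ) : fallingFactorial a (u+1) = fallingFactorial a u * (a - u) :=
  Finset.prod_range_succ _ _

lemma stirl_succ (m u : ℕ) :
    stirlingFirst (m+1) (u+1) = stirlingFirst m u - m * stirlingFirst m (u+1) := by
  unfold stirlingFirst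
  rw [descPochhammer_succ_right, mul_sub, Polynomial.coeff_sub, Polynomial.coeff_mul_X,
    ← Polynomial.C_eq_natCast, Polynomial.coeff_mul_C]
  ring

lemma stirl_zero (m : ℕ) : stirlingFirst (m+1) 0 = -(m : ℝ) * stirlingFirst m 0 := by
  unfold stirlingFirst
  rw [descPochhammer_succ_right, mul_sub, Polynomial.coeff_sub,
    ← Polynomial.C_eq_natCast, Polynomial.coeff_mul_C]
  simp [Polynomial.coeff_mul_X_zero]
  ring

lemma stirl_top (m : ℕ) : stirlingFirst m (m+1) = 0 :=
  Polynomial.coeff_eq_zero_of_natDegree_lt (by simp)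

lemma key_sum (α L : ℝ) (m : ℕ) :
    ∑ u ∈ Finset.range (m+1+1), stirlingFirst (m+1) u * fallingFactorial α u * L ^ (α - u)
    = (∑ u ∈ Finset.range (m+1),
        stirlingFirst m u * fallingFactorial α u * (α - u) * L ^ (α - u - 1))
      - m * ∑ u ∈ Finset.range (m+1), stirlingFirst m u * fallingFactorial α u * L ^ (α - u) := by
  have hstep : ∀ i : ℕ, stirlingFirst (m+1) (i+1) * fallingFactorial α (i+1) * L ^ (α - ↑(i+1))
      = stirlingFirst m i * fallingFactorial α i * (α - i) * L ^ (α - i - 1)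
        - m * (stirlingFirst m (i+1) * fallingFactorial α (i+1) * L ^ (α - ↑(i+1))) := by
    intro i
    have he : (α - ↑(i+1)) = α - i - 1 := by push_cast; ring
    rw [he, stirl_succ, ff_succ]
    ring
  rw [Finset.sum_range_succ' _ (m+1),
    Finset.sum_range_succ' (fun u => stirlingFirst m u * fallingFactorial α u * L ^ (α - u)) m]
  simp only [hstep]
  rw [Finset.sum_sub_distrib, ← Finset.mul_sum,
    Finset.sum_range_succ
      (fun i => stirlingFirst m (i+1) * fallingFactorial α (i+1) * L ^ (α - ↑(i+1))) m,
    stirl_top, stirl_zero]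
  simp only [fallingFactorial, Finset.range_zero, Finset.prod_empty, Nat.cast_zero]
  ring

lemma hasDerivAt_closed (α y : ℝ) (m : ℕ) (s : ℝ)
    (hs : 0 < 1 + s) (hL : 0 < y + Real.log (1 + s)) :
    HasDerivAt
      (fun t => (∑ u ∈ Finset.range (m+1),
          stirlingFirst m u * fallingFactorial α u * (y + Real.log (1+t)) ^ (α - u)) / (1+t)^m)
      ((∑ u ∈ Finset.range (m+1+1),
          stirlingFirst (m+1) u * fallingFactorial α u * (y + Real.log (1+s)) ^ (α - u))
        / (1+s)^(m+1)) s := by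
  have h1 : HasDerivAt (fun t : ℝ => 1 + t) 1 s := by
    simpa using (hasDerivAt_id s).const_add 1
  have hlog : HasDerivAt (fun t => y + Real.log (1 + t)) ((1+s)⁻¹) s := by
    simpa [Function.comp] using ((Real.hasDerivAt_log hs.ne').comp s h1).const_add y
  have hN : HasDerivAt
      (fun t => ∑ u ∈ Finset.range (m+1),
        stirlingFirst m u * fallingFactorial α u * (y + Real.log (1+t)) ^ (α - u))
      (∑ u ∈ Finset.range (m+1),
        stirlingFirst m u * fallingFactorial α u *
          ((1+s)⁻¹ * (α - u) * (y + Real.log (1+s)) ^ (α - u - 1))) s := by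
    apply HasDerivAt.fun_sum
    intro u _
    exact (hlog.rpow_const (Or.inl hL.ne')).const_mul _
  have hD : HasDerivAt (fun t : ℝ => (1+t)^m) ((m:ℝ) * (1+s)^(m-1) * 1) s := h1.pow m
  have hdiv := hN.div hD (pow_ne_zero m hs.ne')
  convert hdiv using 1
  case e'_4 => rfl
  case e'_5 => rfl
  case e'_8 => rfl
  have hM : (∑ u ∈ Finset.range (m+1),
      stirlingFirst m u * fallingFactorial α u *
        ((1+s)⁻¹ * (α - u) * (y + Real.log (1+s)) ^ (α - u - 1)))
      = (1+s)⁻¹ * ∑ u ∈ Finset.range (m+1),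
          stirlingFirst m u * fallingFactorial α u * (α - u) *
            (y + Real.log (1+s)) ^ (α - u - 1) := by
    rw [Finset.mul_sum]; exact Finset.sum_congr rfl fun u _ => by ring
  rw [hM, key_sum α (y + Real.log (1+s)) m]
  set A : ℝ := 1 + s with hA
  set M : ℝ := ∑ u ∈ Finset.range (m+1),
    stirlingFirst m u * fallingFactorial α u * (α - u) * (y + Real.log (1+s)) ^ (α - u - 1)
  set N : ℝ := ∑ u ∈ Finset.range (m+1),
    stirlingFirst m u * fallingFactorial α u * (y + Real.log (1+s)) ^ (α - u)
  have hAne : A ≠ 0 := hs.ne'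
  have e1 : A⁻¹ * A^(m+1) = A^m := by
    rw [pow_succ, ← mul_assoc, mul_comm A⁻¹, mul_assoc, inv_mul_cancel₀ hAne, mul_one]
  have e2 : (m:ℝ) * A^(m-1) * A^(m+1) = (m:ℝ) * (A^m)^2 := by
    cases m with
    | zero => norm_num
    | succ k =>
      have h : k + (k+1+1) = (k+1)*2 := by ring
      rw [Nat.add_sub_cancel, mul_assoc, ← pow_add, h, pow_mul]
  rw [div_eq_div_iff (by positivity) (by positivity)]
  have expand : (A⁻¹ * M * A^m - N * ((m:ℝ) * A^(m-1) * 1)) * A^(m+1)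
      = M * (A⁻¹ * A^(m+1)) * A^m - N * ((m:ℝ) * A^(m-1) * A^(m+1)) := by ring
  rw [expand, e1, e2]
  ring

/-- The closed-form derivative from the proof of the paper's Theorem 4.3:
`dᵐ/drᵐ (y + ln(1+r))^α`, where `^` denotes the real power `Real.rpow`. -/
theorem iteratedDeriv_rpow_log (α y : ℝ) (m : ℕ) (r : ℝ)
    (hr : 0 < 1 + r) (hyr : 0 < y + Real.log (1 + r)) :
    iteratedDeriv m (fun s => (y + Real.log (1 + s)) ^ α) r =
      (∑ u ∈ Finset.range (m + 1),
          stirlingFirst m u * fallingFactorial α u *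
            (y + Real.log (1 + r)) ^ (α - u)) / (1 + r) ^ m := by

  induction m generalizing r hr hyr with
  | zero =>
      simp [stirlingFirst, fallingFactorial, descPochhammer]
  | succ m ih =>
      rw [iteratedDeriv_succ]
      have hcont1 : ContinuousAt (fun t : ℝ => 1 + t) r := by fun_prop
      have h1 : ∀ᶠ t in nhds r, 0 < 1 + t :=
        hcont1.eventually (eventually_gt_nhds hr)
      have hcont2 : ContinuousAt (fun t : ℝ => y + Real.log (1 + t)) r :=
        continuousAt_const.add ((Real.continuousAt_log hr.ne').comp hcont1)
      have h2 : ∀ᶠ t in nhds r, 0 < y + Real.log (1 + t) :=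
        hcont2.eventually (eventually_gt_nhds hyr)
      have hev : (iteratedDeriv m (fun s => (y + Real.log (1 + s)) ^ α))
          =ᶠ[nhds r] (fun t => (∑ u ∈ Finset.range (m + 1),
              stirlingFirst m u * fallingFactorial α u *
                (y + Real.log (1 + t)) ^ (α - u)) / (1 + t) ^ m) := by
        filter_upwards [h1, h2] with t ht1 ht2 using ih t ht1 ht2
      rw [hev.deriv_eq]
      exact (hasDerivAt_closed α y m r hr hyr).deriv
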